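/- Let $N$ be a finitely generated module over $A_R=\mathbb{C}[u,t][[q]]/(ut-q)$ with a connection $D_N$ along $t\partial_t - u\partial_u$, and let $N_0 = \{x \in N : (t-1)^n x = 0 \text{ for some } n\geq 0\}$. Then $N_0$ is a submodule invariant under $D_N$, and applying $D_N$ to the relation $(t-1)^{n_0}N_0 = 0$ for minimal $n_0$ forces $n_0 = 0$, i.e. $N_0 = 0$. -/

import Mathlib

set_option synthInstance.maxHeartbeats 1000000
set_option maxHeartbeats 1000000

noncomputable section

/-- Polynomials `ℂ[u,t]` with `u = X 0`, `t = X 1`. -/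
abbrev Pol2 : Type := MvPolynomial (Fin 2) ℂ

/-- The ring `A_R = ℂ[u,t][[q]]/(ut - q)`. -/
abbrev ARing : Type :=
  (PowerSeries Pol2) ⧸
    (Ideal.span {(PowerSeries.C : Pol2 →+* PowerSeries Pol2) (MvPolynomial.X 0 * MvPolynomial.X 1) - PowerSeries.X})

instance : Algebra ℂ ARing := Ideal.Quotient.algebra ℂ
instance : Module ℂ ARing := Algebra.toModule

/-- The element `u` of `A_R`. -/
def uA : ARing := Ideal.Quotient.mk _ ((PowerSeries.C : Pol2 →+* PowerSeries Pol2) (MvPolynomial.X 0))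

/-- The element `t` of `A_R`. -/
def tA : ARing := Ideal.Quotient.mk _ ((PowerSeries.C : Pol2 →+* PowerSeries Pol2) (MvPolynomial.X 1))

/-- The element `q` of `A_R`. -/
def qA : ARing := Ideal.Quotient.mk _ (PowerSeries.X : PowerSeries Pol2)


section HilbertBasisPowerSeries

open PowerSeries

variable {R : Type*} [CommRing R]

open PowerSeries

variable {R : Type*} [CommRing R]

/-- The ideal of `n`-th coefficients of elements of `I` of order `≥ n`. -/
def coeffIdeal (I : Ideal (PowerSeries R)) (n : ℕ) : Ideal R where
  carrier := {c | ∃ f, f ∈ I ∧ (∀ k < n, coeff k f = 0) ∧ coeff n f = c}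
  zero_mem' := ⟨0, I.zero_mem, by simp, by simp⟩
  add_mem' := by
    rintro a b ⟨f, hfI, hf0, rfl⟩ ⟨g, hgI, hg0, rfl⟩
    exact ⟨f + g, I.add_mem hfI hgI, fun k hk => by simp [hf0 k hk, hg0 k hk], by simp⟩
  smul_mem' := by
    rintro r a ⟨f, hfI, hf0, rfl⟩
    refine ⟨(C r) * f, I.mul_mem_left _ hfI, fun k hk => by simp [hf0 k hk], by simp⟩

theorem coeffIdeal_mono (I : Ideal (PowerSeries R)) : Monotone (coeffIdeal I) := by
  refine monotone_nat_of_le_succ fun n => ?_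
  rintro c ⟨f, hfI, hf0, rfl⟩
  refine ⟨X * f, I.mul_mem_left _ hfI, fun k hk => ?_, coeff_succ_X_mul n f⟩
  cases k with
  | zero => simp
  | succ k => rw [coeff_succ_X_mul]; exact hf0 k (by omega)

theorem coeff_term_aux (k m : ℕ) (a : R) (t : PowerSeries R) :
    coeff m ((C a * X ^ k) * t) = if k ≤ m then a * coeff (m - k) t else 0 := by
  rw [mul_assoc, coeff_C_mul, coeff_X_pow_mul']
  split_ifs <;> simp

theorem tail_mem_span (I : Ideal (PowerSeries R)) (Nb : ℕ) (T : Finset (PowerSeries R))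
    (hTI : ∀ t ∈ T, t ∈ I)
    (hTord : ∀ t ∈ T, ∀ k < Nb, coeff k t = 0)
    (hgen : ∀ m, Nb ≤ m → ∀ g, g ∈ I → (∀ k < m, coeff k g = 0) →
      ∃ a : PowerSeries R → R, ∑ t ∈ T, a t * coeff Nb t = coeff m g)
    (f : PowerSeries R) (hfI : f ∈ I) (hford : ∀ k < Nb, coeff k f = 0) :
    f ∈ Ideal.span (T : Set (PowerSeries R)) := by
  classical
  have hch : ∀ (k : ℕ) (g : PowerSeries R), ∃ a : PowerSeries R → R,
      (g ∈ I ∧ ∀ m < Nb + k, coeff m g = 0) →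
      ∑ t ∈ T, a t * coeff Nb t = coeff (Nb + k) g := by
    intro k g
    by_cases h : g ∈ I ∧ ∀ m < Nb + k, coeff m g = 0
    · obtain ⟨a, ha⟩ := hgen (Nb + k) (by omega) g h.1 h.2
      exact ⟨a, fun _ => ha⟩
    · exact ⟨0, fun hh => absurd hh h⟩
  choose A hA using hch
  set step : ℕ → PowerSeries R → PowerSeries R :=
    fun k g => g - ∑ t ∈ T, (C (A k g t) * X ^ k) * t with hstep
  set rem : ℕ → PowerSeries R := fun k => Nat.rec f step k with hremdef
  have rem_zero : rem 0 = f := rfl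
  have rem_succ : ∀ k, rem (k + 1) = rem k - ∑ t ∈ T, (C (A k (rem k) t) * X ^ k) * t :=
    fun k => rfl
  have hinv : ∀ k, rem k ∈ I ∧ ∀ m < Nb + k, coeff m (rem k) = 0 := by
    intro k
    induction k with
    | zero => exact ⟨hfI, fun m hm => hford m (by omega)⟩
    | succ k ih =>
      refine ⟨?_, ?_⟩
      · rw [rem_succ]
        exact Submodule.sub_mem _ ih.1 (Ideal.sum_mem _ fun t ht => I.mul_mem_left _ (hTI t ht))
      · intro m hm
        rw [rem_succ, map_sub, map_sum]
        simp only [coeff_term_aux]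
        rcases Nat.lt_or_ge m (Nb + k) with h | h
        · rw [ih.2 m h, Finset.sum_eq_zero, sub_zero]
          intro t ht
          split_ifs with hk
          · rw [hTord t ht (m - k) (by omega), mul_zero]
          · rfl
        · have hm' : m = Nb + k := by omega
          subst hm'
          have key := hA k (rem k) ⟨ih.1, ih.2⟩
          have hsum : (∑ t ∈ T, if k ≤ Nb + k then A k (rem k) t * coeff (Nb + k - k) t else 0)
              = coeff (Nb + k) (rem k) := by
            rw [← key]
            refine Finset.sum_congr rfl fun t ht => ?_
            rw [if_pos (by omega), Nat.add_sub_cancel]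
          rw [hsum, sub_self]
  have hpartial : ∀ k,
      f - ∑ t ∈ T, (∑ j ∈ Finset.range k, C (A j (rem j) t) * X ^ j) * t = rem k := by
    intro k
    induction k with
    | zero => simp [rem_zero]
    | succ k ih =>
      have hsplit : ∀ t : PowerSeries R,
          (∑ j ∈ Finset.range (k + 1), C (A j (rem j) t) * X ^ j) * t
            = (∑ j ∈ Finset.range k, C (A j (rem j) t) * X ^ j) * t
              + (C (A k (rem k) t) * X ^ k) * t := by
        intro t
        rw [Finset.sum_range_succ, add_mul]
      rw [Finset.sum_congr rfl fun t _ => hsplit t, Finset.sum_add_distrib, sub_add_eq_sub_sub,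
        ih, rem_succ]
  have hcoeff_partial : ∀ (t : PowerSeries R) (i m : ℕ), i ≤ m →
      coeff i (∑ j ∈ Finset.range (m + 1), C (A j (rem j) t) * X ^ j) = A i (rem i) t := by
    intro t i m him
    rw [map_sum]
    rw [Finset.sum_eq_single i]
    · rw [coeff_C_mul, coeff_X_pow, if_pos rfl, mul_one]
    · intro j _ hji
      rw [coeff_C_mul, coeff_X_pow, if_neg (fun h => hji h.symm), mul_zero]
    · intro hi
      exact absurd (Finset.mem_range.mpr (by omega)) hi
  have hfinal : f = ∑ t ∈ T, (PowerSeries.mk fun j => A j (rem j) t) * t := by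
    rw [← sub_eq_zero]
    ext m
    have e1 : ∀ t ∈ T, coeff m ((PowerSeries.mk fun j => A j (rem j) t) * t)
        = coeff m ((∑ j ∈ Finset.range (m + 1), C (A j (rem j) t) * X ^ j) * t) := by
      intro t _
      rw [coeff_mul, coeff_mul]
      refine Finset.sum_congr rfl fun p hp => ?_
      replace hp : p.1 + p.2 = m := Finset.HasAntidiagonal.mem_antidiagonal.mp hp
      rw [coeff_mk, hcoeff_partial t p.1 m (by omega)]
    rw [map_sub, map_sum, Finset.sum_congr rfl e1, ← map_sum, ← map_sub, hpartial (m + 1),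
      (hinv (m + 1)).2 m (by omega), map_zero]
  rw [hfinal]
  exact Ideal.sum_mem _ fun t ht => Ideal.mul_mem_left _ _ (Ideal.subset_span ht)

theorem PowerSeries.isNoetherianRing_of_isNoetherianRing [IsNoetherianRing R] :
    IsNoetherianRing (PowerSeries R) := by
  classical
  rw [isNoetherianRing_iff_ideal_fg]
  intro I
  obtain ⟨Nb, hNb⟩ := monotone_stabilizes_iff_noetherian.mpr inferInstance
    (⟨coeffIdeal I, coeffIdeal_mono I⟩ : ℕ →o Ideal R)
  have hfg : ∀ n : ℕ, ∃ Sf : Finset (PowerSeries R),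
      (∀ t ∈ Sf, t ∈ I ∧ ∀ k < n, coeff k t = 0) ∧
      ∀ c ∈ coeffIdeal I n, ∃ a : PowerSeries R → R, ∑ t ∈ Sf, a t * coeff n t = c := by
    intro n
    obtain ⟨S, hS⟩ := IsNoetherian.noetherian (coeffIdeal I n)
    have hmem : ∀ c ∈ S, c ∈ coeffIdeal I n := fun c hc => hS ▸ Submodule.subset_span hc
    choose! w hwI hword hwc using hmem
    have hinj : ∀ c ∈ S, ∀ c' ∈ S, w c = w c' → c = c' := by
      intro c hc c' hc' hww
      rw [← hwc c hc, ← hwc c' hc', hww]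
    refine ⟨S.image w, ?_, ?_⟩
    · intro t ht
      obtain ⟨c, hc, rfl⟩ := Finset.mem_image.mp ht
      exact ⟨hwI c hc, hword c hc⟩
    · intro c hc
      have : c ∈ Submodule.span R (S : Set R) := hS.symm ▸ hc
      obtain ⟨a, -, ha⟩ := Submodule.mem_span_finset.mp this
      refine ⟨fun t => a (coeff n t), ?_⟩
      rw [Finset.sum_image hinj, ← ha]
      exact Finset.sum_congr rfl fun s hs => by simp only [hwc s hs, smul_eq_mul]
  choose Sf hSford hSfgen using hfg
  set G : Finset (PowerSeries R) :=
    (Finset.range (Nb + 1)).biUnion (fun n => Sf n) with hG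
  have hGI : ∀ t ∈ G, t ∈ I := by
    intro t ht
    obtain ⟨n, _, htn⟩ := Finset.mem_biUnion.mp ht
    exact (hSford n t htn).1
  have hsub : ∀ n, n ≤ Nb → (Sf n : Set (PowerSeries R)) ⊆ G := by
    intro n hn t ht
    exact Finset.mem_biUnion.mpr ⟨n, Finset.mem_range.mpr (by omega), ht⟩
  have descend : ∀ d n, n + d = Nb → ∀ f ∈ I, (∀ k < n, coeff k f = 0) →
      f ∈ Ideal.span (G : Set (PowerSeries R)) := by
    intro d
    induction d with
    | zero =>
      intro n hn f hfI hford
      obtain rfl : Nb = n := by omega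
      refine Ideal.span_mono (hsub Nb le_rfl) ?_
      refine tail_mem_span I Nb (Sf Nb) (fun t ht => (hSford Nb t ht).1)
        (fun t ht => (hSford Nb t ht).2) ?_ f hfI hford
      intro m hm g hgI hgord
      have hcm : coeff m g ∈ coeffIdeal I m := ⟨g, hgI, hgord, rfl⟩
      have : coeffIdeal I Nb = coeffIdeal I m := hNb m hm
      exact hSfgen Nb _ (this ▸ hcm)
    | succ d ih =>
      intro n hn f hfI hford
      have hcn : coeff n f ∈ coeffIdeal I n := ⟨f, hfI, hford, rfl⟩
      obtain ⟨a, ha⟩ := hSfgen n _ hcn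
      set g : PowerSeries R := f - ∑ t ∈ Sf n, C (a t) * t with hg
      have hgI : g ∈ I :=
        Submodule.sub_mem _ hfI
          (Ideal.sum_mem _ fun t ht => I.mul_mem_left _ ((hSford n t ht).1))
      have hgord : ∀ k < n + 1, coeff k g = 0 := by
        intro k hk
        rw [hg, map_sub, map_sum]
        simp only [coeff_C_mul]
        rcases Nat.lt_or_ge k n with h | h
        · rw [hford k h, Finset.sum_eq_zero, sub_zero]
          intro t ht
          rw [(hSford n t ht).2 k h, mul_zero]
        · have : k = n := by omega
          subst this
          rw [ha, sub_self]
      have hgspan := ih (n + 1) (by omega) g hgI hgord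
      have : f = g + ∑ t ∈ Sf n, C (a t) * t := by rw [hg]; ring
      rw [this]
      exact Ideal.add_mem _ hgspan
        (Ideal.sum_mem _ fun t ht =>
          Ideal.mul_mem_left _ _ (Ideal.subset_span (hsub n (by omega) ht)))
  refine ⟨G, le_antisymm ?_ ?_⟩
  · rw [Ideal.span_le]
    exact fun t ht => hGI t ht
  · intro f hf
    exact descend Nb 0 (by omega) f hf (fun k hk => absurd hk (by omega))

end HilbertBasisPowerSeries

instance ARing.isNoetherianRing : IsNoetherianRing ARing :=
  @Ideal.Quotient.isNoetherianRing (PowerSeries Pol2) _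
    PowerSeries.isNoetherianRing_of_isNoetherianRing _

/-- Let `N` be a finitely generated module over `A_R = ℂ[u,t][[q]]/(ut-q)` with a connection
`D_N` along `t∂t - u∂u`, and let `N₀ = {x ∈ N : (t-1)^n x = 0 for some n}` be the
`(t-1)`-power-torsion subset.  Then `N₀` is a submodule, it is invariant under `D_N`, and
`N₀ = 0`. -/
theorem stmt17 (DA : Derivation ℂ ARing ARing) (hDu : DA uA = -uA) (hDt : DA tA = tA)
    (N : Type) [AddCommGroup N] [Module ARing N] [Module.Finite ARing N]
    (DN : N →+ N) (hDN : ∀ (f : ARing) (x : N), DN (f • x) = DA f • x + f • DN x) :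
    (∀ x y : N, x ∈ {x : N | ∃ n : ℕ, (tA - 1) ^ n • x = 0} →
        y ∈ {x : N | ∃ n : ℕ, (tA - 1) ^ n • x = 0} →
        x + y ∈ {x : N | ∃ n : ℕ, (tA - 1) ^ n • x = 0}) ∧
    (∀ (a : ARing) (x : N), x ∈ {x : N | ∃ n : ℕ, (tA - 1) ^ n • x = 0} →
        a • x ∈ {x : N | ∃ n : ℕ, (tA - 1) ^ n • x = 0}) ∧
    (∀ x : N, x ∈ {x : N | ∃ n : ℕ, (tA - 1) ^ n • x = 0} →
        DN x ∈ {x : N | ∃ n : ℕ, (tA - 1) ^ n • x = 0}) ∧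
    (∀ x : N, x ∈ {x : N | ∃ n : ℕ, (tA - 1) ^ n • x = 0} → x = 0) := by
  classical
  have hDt1 : DA (tA - 1) = tA := by rw [map_sub, Derivation.map_one_eq_zero, hDt, sub_zero]
  have hadd : ∀ x y : N, x ∈ {x : N | ∃ n : ℕ, (tA - 1) ^ n • x = 0} →
      y ∈ {x : N | ∃ n : ℕ, (tA - 1) ^ n • x = 0} →
      x + y ∈ {x : N | ∃ n : ℕ, (tA - 1) ^ n • x = 0} := by
    rintro x y ⟨n, hn⟩ ⟨m, hm⟩
    refine ⟨n + m, ?_⟩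
    have e1 : (tA - 1) ^ (n + m) • x = 0 := by
      rw [add_comm n m, pow_add, mul_smul, hn, smul_zero]
    have e2 : (tA - 1) ^ (n + m) • y = 0 := by
      rw [pow_add, mul_smul, hm, smul_zero]
    rw [smul_add, e1, e2, add_zero]
  have hsmulS : ∀ (a : ARing) (x : N), x ∈ {x : N | ∃ n : ℕ, (tA - 1) ^ n • x = 0} →
      a • x ∈ {x : N | ∃ n : ℕ, (tA - 1) ^ n • x = 0} := by
    rintro a x ⟨n, hn⟩
    exact ⟨n, by rw [smul_comm, hn, smul_zero]⟩
  have hzero : (0 : N) ∈ {x : N | ∃ n : ℕ, (tA - 1) ^ n • x = 0} := ⟨0, by simp⟩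
  have hDinv : ∀ x : N, x ∈ {x : N | ∃ n : ℕ, (tA - 1) ^ n • x = 0} →
      DN x ∈ {x : N | ∃ n : ℕ, (tA - 1) ^ n • x = 0} := by
    rintro x ⟨n, hn⟩
    cases n with
    | zero =>
      have hx0 : x = 0 := by simpa using hn
      rw [hx0, map_zero]
      exact hzero
    | succ m =>
      refine ⟨m + 2, ?_⟩
      have h0 : DA ((tA - 1) ^ (m + 1)) • x + (tA - 1) ^ (m + 1) • DN x = 0 := by
        rw [← hDN, hn, map_zero]
      have h1 : (tA - 1) ^ (m + 1) • DN x = -(DA ((tA - 1) ^ (m + 1)) • x) :=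
        eq_neg_of_add_eq_zero_right h0
      have key : (tA - 1) * DA ((tA - 1) ^ (m + 1)) = (m + 1) • (tA * (tA - 1) ^ (m + 1)) := by
        rw [Derivation.leibniz_pow, hDt1, Nat.add_sub_cancel]
        simp only [smul_eq_mul, nsmul_eq_mul]
        push_cast
        ring
      calc (tA - 1) ^ (m + 2) • DN x
          = (tA - 1) • ((tA - 1) ^ (m + 1) • DN x) := by rw [← mul_smul, ← pow_succ']
        _ = (tA - 1) • (-(DA ((tA - 1) ^ (m + 1)) • x)) := by rw [h1]
        _ = -(((tA - 1) * DA ((tA - 1) ^ (m + 1))) • x) := by rw [smul_neg, ← mul_smul]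
        _ = -((((m + 1) • (tA * (tA - 1) ^ (m + 1))) : ARing) • x) := by rw [key]
        _ = 0 := by
            rw [nsmul_eq_mul, mul_smul, mul_smul, hn, smul_zero, smul_zero, neg_zero]
  refine ⟨hadd, hsmulS, hDinv, ?_⟩
  set N0 : Submodule ARing N :=
    { carrier := {x : N | ∃ n : ℕ, (tA - 1) ^ n • x = 0}
      add_mem' := fun {a b} ha hb => hadd a b ha hb
      zero_mem' := hzero
      smul_mem' := fun a x hx => hsmulS a x hx } with hN0
  have hNoeth : IsNoetherian ARing N := isNoetherian_of_isNoetherianRing_of_finite ARing N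
  obtain ⟨T, hT⟩ := IsNoetherian.noetherian N0
  have hTS : ∀ s ∈ T, ∃ n : ℕ, (tA - 1) ^ n • s = 0 := by
    intro s hs
    have h : s ∈ N0 := hT ▸ Submodule.subset_span hs
    exact h
  choose! e he using hTS
  set n₀ := T.sup e with hn₀
  have hbound : ∀ x ∈ N0, (tA - 1) ^ n₀ • x = 0 := by
    intro x hx
    rw [← hT] at hx
    induction hx using Submodule.span_induction with
    | mem s hs =>
      have hle : e s ≤ n₀ := Finset.le_sup hs
      have hsplit : (tA - 1) ^ n₀ = (tA - 1) ^ (n₀ - e s) * (tA - 1) ^ (e s) := by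
        rw [← pow_add, Nat.sub_add_cancel hle]
      rw [hsplit, mul_smul, he s hs, smul_zero]
    | zero => rw [smul_zero]
    | add x y hx hy ihx ihy => rw [smul_add, ihx, ihy, add_zero]
    | smul a x hx ih => rw [smul_comm, ih, smul_zero]
  have main : ∀ n : ℕ, (∀ x ∈ N0, (tA - 1) ^ n • x = 0) → ∀ x ∈ N0, x = 0 := by
    intro n
    induction n with
    | zero =>
      intro h x hx
      simpa using h x hx
    | succ m ih =>
      intro h x hx
      refine ih ?_ x hx
      intro y hy
      have h0 : DA ((tA - 1) ^ (m + 1)) • y + (tA - 1) ^ (m + 1) • DN y = 0 := by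
        rw [← hDN, h y hy, map_zero]
      have h2 : (tA - 1) ^ (m + 1) • DN y = 0 := h (DN y) (hDinv y hy)
      rw [h2, add_zero] at h0
      have hDpow : DA ((tA - 1) ^ (m + 1))
          = (m + 1) • ((tA - 1) ^ (m + 1)) + (m + 1) • ((tA - 1) ^ m) := by
        rw [Derivation.leibniz_pow, hDt1, Nat.add_sub_cancel, smul_eq_mul]
        have hr : (tA - 1) ^ m * tA = (tA - 1) ^ (m + 1) + (tA - 1) ^ m := by ring
        rw [hr, smul_add]
      rw [hDpow, add_smul] at h0
      have e1 : (((m + 1) • ((tA - 1) ^ (m + 1))) : ARing) • y = 0 := by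
        rw [nsmul_eq_mul, mul_smul, h y hy, smul_zero]
      rw [e1, zero_add] at h0
      have e2 : (((m + 1 : ℕ) : ARing)) • ((tA - 1) ^ m • y) = 0 := by
        rw [← mul_smul, ← nsmul_eq_mul]
        exact h0
      have hne : ((m + 1 : ℕ) : ℂ) ≠ 0 := Nat.cast_ne_zero.mpr (Nat.succ_ne_zero m)
      have hc : (algebraMap ℂ ARing (((m + 1 : ℕ) : ℂ)⁻¹)) * ((m + 1 : ℕ) : ARing) = 1 := by
        rw [← map_natCast (algebraMap ℂ ARing) (m + 1), ← map_mul, inv_mul_cancel₀ hne, map_one]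
      calc (tA - 1) ^ m • y
          = ((algebraMap ℂ ARing (((m + 1 : ℕ) : ℂ)⁻¹)) * ((m + 1 : ℕ) : ARing))
              • ((tA - 1) ^ m • y) := by rw [hc, one_smul]
        _ = (algebraMap ℂ ARing (((m + 1 : ℕ) : ℂ)⁻¹))
              • (((m + 1 : ℕ) : ARing) • ((tA - 1) ^ m • y)) := by rw [mul_smul]
        _ = 0 := by rw [e2, smul_zero]
  exact fun x hx => main n₀ hbound x hx

end
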